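/- Let $S^1 \subset \mathbb{R}^2$ be the unit circle, $x \in S^1$, and let $T_x S^1$ denote the affine tangent line to $S^1$ at $x$. For $0 \leq r \leq 1$, let $B_r^{S^1}(x) = S^1 \cap B_r(x)$ and $B_r^{T}(x) = T_x S^1 \cap B_r(x)$, where $B_r(x)$ is the closed Euclidean ball of radius $r$ centered at $x$. Then the Hausdorff distance satisfies $d_H(B_r^{S^1}(x), B_r^T(x)) \leq \frac{1}{2} r^2$. -/

import Mathlib

open Metric

private lemma dist2 (p q : EuclideanSpace ℝ (Fin 2)) :
    dist p q = Real.sqrt ((p 0 - q 0)^2 + (p 1 - q 1)^2) := by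
  rw [EuclideanSpace.dist_eq, Fin.sum_univ_two]
  simp [Real.dist_eq, sq_abs]

private lemma sqrt_le_of_le_sq {s B : ℝ} (hB : 0 ≤ B) (hs : s ≤ B^2) : Real.sqrt s ≤ B :=
  (Real.sqrt_le_sqrt hs).trans_eq (Real.sqrt_sq hB)

private lemma sq_of_sqrt_le {s B : ℝ} (hs : 0 ≤ s) (h : Real.sqrt s ≤ B) : s ≤ B^2 := by
  have := pow_le_pow_left₀ (Real.sqrt_nonneg s) h 2
  rwa [Real.sq_sqrt hs] at this

private lemma hexp1 (t c : ℝ) (hc : 0 < c) (h : c^2 = 1+t^2) :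
    (1/c - 1)^2 + (t/c - t)^2 = (c - 1)^2 := by
  field_simp
  linear_combination (-(c^2 - 2*c + 1)) * h

private lemma hexp2 (t c : ℝ) (hc : 0 < c) (h : c^2 = 1+t^2) :
    (1/c - 1)^2 + (t/c)^2 = 2 - 2/c := by
  field_simp
  linear_combination (-1 : ℝ) * h

set_option maxHeartbeats 1000000 in
/-- Tangent-line approximation of the unit circle: with `x = (1,0) ∈ S¹ ⊂ ℝ²` and
tangent line `T = {p : p₀ = 1}`, for `0 ≤ r ≤ 1` the Hausdorff distance between
`S¹ ∩ B̄_r(x)` and `T ∩ B̄_r(x)` is at most `r²/2`. -/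
theorem circle_tangent_hausdorff (r : ℝ) (hr0 : 0 ≤ r) (hr1 : r ≤ 1)
    (x : EuclideanSpace ℝ (Fin 2)) (hx : x = (WithLp.equiv 2 (Fin 2 → ℝ)).symm ![1, 0]) :
    Metric.hausdorffDist
      (Metric.sphere (0 : EuclideanSpace ℝ (Fin 2)) 1 ∩ Metric.closedBall x r)
      ({p : EuclideanSpace ℝ (Fin 2) | p 0 = 1} ∩ Metric.closedBall x r) ≤
      (1 / 2) * r ^ 2 := by
  have hx0 : x 0 = 1 := by rw [hx]; rfl
  have hx1 : x 1 = 0 := by rw [hx]; rfl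
  apply Metric.hausdorffDist_le_of_mem_dist (by positivity)
  · rintro a ⟨haS, haB⟩
    have haS' : dist a 0 = 1 := mem_sphere.mp haS
    rw [dist2] at haS'
    have h0 : (0 : EuclideanSpace ℝ (Fin 2)) 0 = 0 := rfl
    have h1 : (0 : EuclideanSpace ℝ (Fin 2)) 1 = 0 := rfl
    rw [h0, h1, sub_zero, sub_zero] at haS'
    have hcirc : a 0 ^ 2 + a 1 ^ 2 = 1 := by
      have := congrArg (· ^ 2) haS'
      simpa [Real.sq_sqrt (by positivity : (0:ℝ) ≤ a 0 ^ 2 + a 1 ^ 2)] using this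
    have haB' : dist a x ≤ r := mem_closedBall.mp haB
    rw [dist2, hx0, hx1, sub_zero] at haB'
    have hdle : (a 0 - 1)^2 + a 1 ^ 2 ≤ r^2 := sq_of_sqrt_le (by positivity) haB'
    refine ⟨(WithLp.equiv 2 (Fin 2 → ℝ)).symm ![1, a 1], ⟨rfl, ?_⟩, ?_⟩
    · rw [mem_closedBall, dist2, hx0, hx1]
      have hb0 : ((WithLp.equiv 2 (Fin 2 → ℝ)).symm ![1, a 1]) 0 = 1 := rfl
      have hb1 : ((WithLp.equiv 2 (Fin 2 → ℝ)).symm ![1, a 1]) 1 = a 1 := rfl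
      rw [hb0, hb1]
      apply sqrt_le_of_le_sq hr0
      nlinarith [sq_nonneg (a 0 - 1), sq_nonneg (a 0 + 1)]
    · rw [dist2]
      have hb0 : ((WithLp.equiv 2 (Fin 2 → ℝ)).symm ![1, a 1]) 0 = 1 := rfl
      have hb1 : ((WithLp.equiv 2 (Fin 2 → ℝ)).symm ![1, a 1]) 1 = a 1 := rfl
      rw [hb0, hb1]
      apply sqrt_le_of_le_sq (by positivity)
      nlinarith [sq_nonneg (a 0 - 1), sq_nonneg (a 0 + 1), sq_nonneg (a 1)]
  · rintro b ⟨hbT, hbB⟩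
    have hb0 : b 0 = 1 := hbT
    set t := b 1 with ht
    have hbB' : dist b x ≤ r := mem_closedBall.mp hbB
    rw [dist2, hx0, hx1, hb0, sub_self, sub_zero] at hbB'
    have hu : t ^ 2 ≤ r ^ 2 := by
      have := sq_of_sqrt_le (by positivity) hbB'
      nlinarith [this]
    set c := Real.sqrt (1 + t^2) with hc
    have hc2 : c ^ 2 = 1 + t ^ 2 := Real.sq_sqrt (by positivity)
    have hc1 : 1 ≤ c := by
      have h := Real.sqrt_le_sqrt (show (1:ℝ) ≤ 1 + t^2 by nlinarith [sq_nonneg t])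
      simpa [hc] using h
    have hcpos : 0 < c := lt_of_lt_of_le one_pos hc1
    clear_value t c
    refine ⟨(WithLp.equiv 2 (Fin 2 → ℝ)).symm ![1/c, t/c], ⟨?_, ?_⟩, ?_⟩
    · rw [mem_sphere, dist2]
      have ha0 : ((WithLp.equiv 2 (Fin 2 → ℝ)).symm ![1/c, t/c]) 0 = 1/c := rfl
      have ha1 : ((WithLp.equiv 2 (Fin 2 → ℝ)).symm ![1/c, t/c]) 1 = t/c := rfl
      have h0 : (0 : EuclideanSpace ℝ (Fin 2)) 0 = 0 := rfl
      have h1 : (0 : EuclideanSpace ℝ (Fin 2)) 1 = 0 := rfl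
      rw [ha0, ha1, h0, h1, sub_zero, sub_zero]
      have : (1/c)^2 + (t/c)^2 = 1 := by
        field_simp
        linarith [hc2]
      rw [this, Real.sqrt_one]
    · rw [mem_closedBall, dist2, hx0, hx1]
      have ha0 : ((WithLp.equiv 2 (Fin 2 → ℝ)).symm ![1/c, t/c]) 0 = 1/c := rfl
      have ha1 : ((WithLp.equiv 2 (Fin 2 → ℝ)).symm ![1/c, t/c]) 1 = t/c := rfl
      rw [ha0, ha1, sub_zero]
      apply sqrt_le_of_le_sq hr0
      have key : (2 - t^2) * c ≤ 2 := by
        nlinarith [sq_nonneg ((2 - t^2) * c - 2), sq_nonneg ((2 - t^2) * c + 2),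
          sq_nonneg t, mul_pos hcpos hcpos]
      rw [hexp2 t c hcpos hc2]
      have h2 : 2 - t^2 ≤ 2/c := (le_div_iff₀ hcpos).mpr key
      linarith
    · rw [dist2]
      have ha0 : ((WithLp.equiv 2 (Fin 2 → ℝ)).symm ![1/c, t/c]) 0 = 1/c := rfl
      have ha1 : ((WithLp.equiv 2 (Fin 2 → ℝ)).symm ![1/c, t/c]) 1 = t/c := rfl
      rw [ha0, ha1, hb0]
      apply sqrt_le_of_le_sq (by positivity)
      have hre : (1 - 1/c)^2 + (t - t/c)^2 = (1/c - 1)^2 + (t/c - t)^2 := by ring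
      rw [← ht, hre, hexp1 t c hcpos hc2]
      have hcle : c ≤ 1 + t^2/2 := by
        nlinarith [sq_nonneg (c - (1 + t^2/2)), sq_nonneg t]
      have h2 : (0:ℝ) ≤ c - 1 := by linarith
      calc (c-1)^2 ≤ (t^2/2)^2 := by nlinarith
        _ ≤ (1/2 * r^2)^2 := by nlinarith [sq_nonneg t, sq_nonneg r]
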